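/- Let V be a finite-dimensional real inner product space, ι a finite index set, v : ι → V, a : ι → ℝ, and let 𝒮 be a finite nonempty collection of subsets of ι such that every index i ∈ ι belongs to some member of 𝒮. Then the following are equivalent: (i) for every σ ∈ 𝒮 there exists u ∈ V such that a_i + ⟨u, v_i⟩ ≥ 0 for all i ∈ ι, with equality a_i + ⟨u, v_i⟩ = 0 for all i ∈ σ; (ii) there exists a sublinear function ψ : V → ℝ (that is, ψ(x + y) ≤ ψ(x) + ψ(y) for all x, y and ψ(c • x) = c·ψ(x) for all c ≥ 0) such that ψ(v_i) = a_i for all i ∈ ι and, for each σ ∈ 𝒮, the restriction of ψ to the positive hull pos{v_i : i ∈ σ} agrees with some linear functional on V. -/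

import Mathlib

open scoped RealInnerProductSpace

/-- Fan-free form of the equivalence (2) ⇔ (3) of Proposition 2.3:
for a finite family `v : ι → V`, coefficients `a : ι → ℝ`, and a nonempty finite
collection `𝒮` of subsets of `ι` covering `ι`, the existence for each `σ ∈ 𝒮` of a
vector `u` with `a i + ⟪u, v i⟫ ≥ 0` for all `i`, with equality for `i ∈ σ`, is
equivalent to the existence of a sublinear function `ψ` with `ψ (v i) = a i` for all
`i` that agrees with a linear functional on the positive hull of `{v i : i ∈ σ}` for
each `σ ∈ 𝒮`. -/
theorem exists_u_iff_exists_sublinear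
    (V : Type*) [NormedAddCommGroup V] [InnerProductSpace ℝ V] [FiniteDimensional ℝ V]
    (ι : Type*) [Fintype ι] (v : ι → V) (a : ι → ℝ)
    (𝒮 : Finset (Finset ι)) (h𝒮 : 𝒮.Nonempty)
    (hcover : ∀ i : ι, ∃ σ ∈ 𝒮, i ∈ σ) :
    (∀ σ ∈ 𝒮, ∃ u : V,
        (∀ i : ι, 0 ≤ a i + ⟪u, v i⟫) ∧ (∀ i ∈ σ, a i + ⟪u, v i⟫ = 0))
    ↔
    (∃ ψ : V → ℝ,
        (∀ x y : V, ψ (x + y) ≤ ψ x + ψ y) ∧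
        (∀ (c : ℝ), 0 ≤ c → ∀ x : V, ψ (c • x) = c * ψ x) ∧
        (∀ i : ι, ψ (v i) = a i) ∧
        (∀ σ ∈ 𝒮, ∃ ℓ : V →ₗ[ℝ] ℝ,
          ∀ c : ι → ℝ, (∀ i, 0 ≤ c i) →
            ψ (∑ i ∈ σ, c i • v i) = ℓ (∑ i ∈ σ, c i • v i))) := by
  classical
  constructor
  · -- Forward direction
    intro h
    have h' : ∀ σ : Finset ι, ∃ u : V, σ ∈ 𝒮 →
        (∀ i : ι, 0 ≤ a i + ⟪u, v i⟫) ∧ (∀ i ∈ σ, a i + ⟪u, v i⟫ = 0) := by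
      intro σ
      by_cases hσ : σ ∈ 𝒮
      · obtain ⟨u, hu⟩ := h σ hσ; exact ⟨u, fun _ => hu⟩
      · exact ⟨0, fun hc => absurd hc hσ⟩
    choose u hu using h'
    have hterm_le : ∀ σ ∈ 𝒮, ∀ i : ι, ⟪-u σ, v i⟫ ≤ a i := by
      intro σ hσ i
      have := (hu σ hσ).1 i
      rw [inner_neg_left]
      linarith
    have hterm_eq : ∀ σ ∈ 𝒮, ∀ i ∈ σ, ⟪-u σ, v i⟫ = a i := by
      intro σ hσ i hi
      have := (hu σ hσ).2 i hi
      rw [inner_neg_left]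
      linarith
    refine ⟨fun x => 𝒮.sup' h𝒮 (fun σ => ⟪-u σ, x⟫), ?_, ?_, ?_, ?_⟩
    · intro x y
      dsimp only
      apply Finset.sup'_le
      intro σ hσ
      rw [inner_add_right]
      exact add_le_add (Finset.le_sup' (fun σ => ⟪-u σ, x⟫) hσ)
        (Finset.le_sup' (fun σ => ⟪-u σ, y⟫) hσ)
    · intro c hc x
      dsimp only
      obtain ⟨σ₀, hσ₀, hmax⟩ := Finset.exists_mem_eq_sup' h𝒮 (fun σ => ⟪-u σ, x⟫)
      apply le_antisymm
      · apply Finset.sup'_le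
        intro σ hσ
        rw [real_inner_smul_right]
        refine mul_le_mul_of_nonneg_left ?_ hc
        exact Finset.le_sup' (fun σ => ⟪-u σ, x⟫) hσ
      · calc c * 𝒮.sup' h𝒮 (fun σ => ⟪-u σ, x⟫) = c * ⟪-u σ₀, x⟫ := by rw [hmax]
          _ = ⟪-u σ₀, c • x⟫ := (real_inner_smul_right _ _ _).symm
          _ ≤ _ := Finset.le_sup' (fun σ => ⟪-u σ, c • x⟫) hσ₀
    · intro i
      dsimp only
      apply le_antisymm
      · exact Finset.sup'_le _ _ fun σ hσ => hterm_le σ hσ i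
      · obtain ⟨σ, hσ, hiσ⟩ := hcover i
        calc a i = ⟪-u σ, v i⟫ := (hterm_eq σ hσ i hiσ).symm
          _ ≤ _ := Finset.le_sup' (fun σ => ⟪-u σ, v i⟫) hσ
    · intro σ hσ
      refine ⟨(innerSL ℝ (-u σ)).toLinearMap, ?_⟩
      intro c hc
      dsimp only
      have hsum : ∀ w : V, ⟪w, ∑ i ∈ σ, c i • v i⟫ = ∑ i ∈ σ, c i * ⟪w, v i⟫ := by
        intro w
        rw [inner_sum]
        exact Finset.sum_congr rfl fun i _ => real_inner_smul_right _ _ _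
      have hℓval : ((innerSL ℝ (-u σ)).toLinearMap : V → ℝ) (∑ i ∈ σ, c i • v i)
          = ⟪-u σ, ∑ i ∈ σ, c i • v i⟫ := rfl
      rw [hℓval]
      apply le_antisymm
      · obtain ⟨σ', hσ', hmax⟩ :=
          Finset.exists_mem_eq_sup' h𝒮 (fun τ => ⟪-u τ, ∑ i ∈ σ, c i • v i⟫)
        rw [hmax, hsum, hsum]
        apply Finset.sum_le_sum
        intro i hi
        calc c i * ⟪-u σ', v i⟫ ≤ c i * a i :=
              mul_le_mul_of_nonneg_left (hterm_le σ' hσ' i) (hc i)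
          _ = c i * ⟪-u σ, v i⟫ := by rw [hterm_eq σ hσ i hi]
      · exact Finset.le_sup' (fun τ => ⟪-u τ, ∑ i ∈ σ, c i • v i⟫) hσ
  · -- Backward direction
    rintro ⟨ψ, hadd, hhom, hval, hlin⟩ σ hσ
    obtain ⟨ℓ, hℓ⟩ := hlin σ hσ
    have hℓv : ∀ i ∈ σ, ℓ (v i) = a i := by
      intro i hi
      have := hℓ (fun j => if j = i then 1 else 0)
        (fun j => by by_cases h : j = i <;> simp [h])
      have hsum : (∑ j ∈ σ, (if j = i then (1:ℝ) else 0) • v j) = v i := by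
        simp [ite_smul, hi]
      rw [hsum] at this
      rw [← this, hval i]
    -- the span of the vectors of σ
    set W : Submodule ℝ V := Submodule.span ℝ (Set.range (fun i : {x // x ∈ σ} => v i))
      with hW
    have hkey : ∀ d : {x // x ∈ σ} → ℝ, (∀ i, 0 ≤ d i) →
        ψ (∑ i : {x // x ∈ σ}, d i • v i) = ℓ (∑ i : {x // x ∈ σ}, d i • v i) := by
      intro d hd
      have hrw : (∑ i : {x // x ∈ σ}, d i • v (i : ι))
          = ∑ j ∈ σ, (fun j => if h : j ∈ σ then d ⟨j, h⟩ else 0) j • v j := by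
        rw [← Finset.sum_coe_sort σ (fun j => (fun j => if h : j ∈ σ then d ⟨j, h⟩ else 0) j • v j)]
        exact Finset.sum_congr rfl fun i _ => by simp
      rw [hrw]
      exact hℓ _ (fun j => by split <;> [exact hd _; exact le_rfl])
    have hle : ∀ x ∈ W, ℓ x ≤ ψ x := by
      intro x hx
      rw [hW, Submodule.mem_span_range_iff_exists_fun] at hx
      obtain ⟨c, hc⟩ := hx
      set cp : {x // x ∈ σ} → ℝ := fun i => max (c i) 0 with hcp
      set cm : {x // x ∈ σ} → ℝ := fun i => max (-c i) 0 with hcm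
      set y : V := ∑ i : {x // x ∈ σ}, cp i • v i with hy
      set z : V := ∑ i : {x // x ∈ σ}, cm i • v i with hz
      have hyz : y = x + z := by
        rw [hy, hz, ← hc, ← Finset.sum_add_distrib]
        apply Finset.sum_congr rfl
        intro i _
        rw [← add_smul]
        congr 1
        rw [hcp, hcm]
        dsimp only
        rcases le_total (c i) 0 with h | h
        · rw [max_eq_right h, max_eq_left (by linarith)]; ring
        · rw [max_eq_left h, max_eq_right (by linarith)]; ring
      have hψy : ψ y = ℓ y := hkey cp fun i => le_max_right _ _
      have hψz : ψ z = ℓ z := hkey cm fun i => le_max_right _ _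
      have h1 : ψ y ≤ ψ x + ψ z := by rw [hyz]; exact hadd x z
      have h2 : ℓ x = ℓ y - ℓ z := by rw [hyz]; simp
      linarith
    -- Hahn-Banach extension
    obtain ⟨g, hg1, hg2⟩ := exists_extension_of_le_sublinear (ℓ.toPMap W) ψ
      (fun c hc x => hhom c hc.le x) hadd
      (fun x => by exact (le_of_eq (LinearMap.toPMap_apply ℓ W x)).trans (hle x x.2))
    -- Riesz representation
    set w : V := (InnerProductSpace.toDual ℝ V).symm (LinearMap.toContinuousLinearMap g)
      with hw
    have hwx : ∀ x : V, ⟪w, x⟫ = g x := by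
      intro x
      rw [hw, InnerProductSpace.toDual_symm_apply]
      rfl
    refine ⟨-w, ?_, ?_⟩
    · intro i
      rw [inner_neg_left, hwx]
      have := hg2 (v i)
      rw [hval i] at this
      linarith
    · intro i hi
      rw [inner_neg_left, hwx]
      have hmem : v i ∈ W := by
        rw [hW]
        exact Submodule.subset_span ⟨⟨i, hi⟩, rfl⟩
      have := hg1 ⟨v i, hmem⟩
      replace this := this.trans (LinearMap.toPMap_apply ℓ W ⟨v i, hmem⟩)
      simp only at this
      rw [this, hℓv i hi]
      ring
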